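/- Let random vectors ĝ^(l) ∈ ℝ^{d_l}, l = 1..L, with E[‖ĝ^(l)‖²] finite, and let the clipped estimator be g̃^(l) = min(1/(K·p_l), C)·N_l·ĝ^(l) where N_l is the count of layer l in K draws with replacement with probabilities p_l (independent of ĝ given the state). Then E[‖g̃‖²] ≤ (C+1)·∑_{l=1}^L E[‖ĝ^(l)‖²] = (C+1)·E[‖ĝ‖²]. -/

import Mathlib

open MeasureTheory ProbabilityTheory

lemma clip_factor_bound (a q C : ℝ) (ha : 0 < a) (hq : 0 ≤ q) (hq1 : q ≤ 1)
    (hC : 0 < C) : (min (1 / a) C) ^ 2 * (a * (1 - q) + a ^ 2) ≤ C + 1 := by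
  rcases le_total (1 / a) C with h | h
  · rw [min_eq_left h]
    have h1 : 1 ≤ C * a := by
      rw [div_le_iff₀ ha] at h; linarith
    rw [div_pow, one_pow, div_mul_eq_mul_div, div_le_iff₀ (by positivity)]
    nlinarith [mul_nonneg (mul_nonneg ha.le hq) ha.le, sq_nonneg a]
  · rw [min_eq_right h]
    have h1 : C * a ≤ 1 := by
      rw [le_div_iff₀ ha] at h; linarith
    nlinarith [mul_nonneg (mul_nonneg (mul_nonneg hC.le hC.le) ha.le) hq,
      mul_nonneg hC.le ha.le, sq_nonneg (C * a)]

/-- Second-moment bound for the clipped block-wise IPW estimator: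
with `g̃^(l) = min(1/(K·p_l), C)·N_l • ĝ^(l)`, where `N_l` has the binomial second moment
`E[N_l²] = K·p_l·(1−p_l) + (K·p_l)²` and is independent of `ĝ^(l)`,
`E[‖g̃‖²] ≤ (C+1)·∑_l E[‖ĝ^(l)‖²]`. -/
theorem clipped_blockwise_ipw_second_moment {Ω : Type*} [MeasurableSpace Ω]
    (μ : Measure Ω) [IsProbabilityMeasure μ] (L : ℕ) (dim : Fin L → ℕ)
    (K : ℕ) (hK : 1 ≤ K) (C : ℝ) (hC : 0 < C)
    (p : Fin L → ℝ) (hp : ∀ l, 0 < p l) (hp1 : ∀ l, p l ≤ 1) (hpsum : ∑ l, p l = 1)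
    (ghat : Ω → ∀ l, EuclideanSpace ℝ (Fin (dim l))) (N : Ω → Fin L → ℕ)
    (hmeasg : ∀ l, Measurable fun ω => ghat ω l) (hmeasN : Measurable N)
    (hN2 : ∀ l, ∫ ω, (N ω l : ℝ) ^ 2 ∂μ
      = K * p l * (1 - p l) + ((K : ℝ) * p l) ^ 2)
    (hindep : ∀ l, IndepFun (fun ω => N ω l) (fun ω => ghat ω l) μ)
    (hint2 : ∀ l, Integrable (fun ω => ‖ghat ω l‖ ^ 2) μ)
    (hinth : ∀ l, Integrable
      (fun ω => ‖(min (1 / ((K : ℝ) * p l)) C * (N ω l : ℝ)) • ghat ω l‖ ^ 2) μ) :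
    ∑ l, ∫ ω, ‖(min (1 / ((K : ℝ) * p l)) C * (N ω l : ℝ)) • ghat ω l‖ ^ 2 ∂μ
      ≤ (C + 1) * ∑ l, ∫ ω, ‖ghat ω l‖ ^ 2 ∂μ := by
  rw [Finset.mul_sum]
  apply Finset.sum_le_sum
  intro l _
  set m : ℝ := min (1 / ((K : ℝ) * p l)) C with hm
  have ha : (0 : ℝ) < (K : ℝ) * p l := by
    have h0 : (0 : ℝ) < (K : ℝ) := by exact_mod_cast hK
    exact mul_pos h0 (hp l)
  -- independence of N_l² and ‖ghat_l‖²
  have hNl : Measurable fun ω => N ω l := (measurable_pi_apply l).comp hmeasN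
  have hX : Measurable fun ω => ((N ω l : ℝ)) ^ 2 :=
    (measurable_from_top (f := fun n : ℕ => ((n : ℝ)) ^ 2)).comp hNl
  have hY : Measurable fun ω => ‖ghat ω l‖ ^ 2 :=
    ((hmeasg l).norm.pow_const 2)
  have hind2 : IndepFun (fun ω => ((N ω l : ℝ)) ^ 2) (fun ω => ‖ghat ω l‖ ^ 2) μ :=
    (hindep l).comp (measurable_from_top.pow_const 2)
      (measurable_norm.pow_const 2)
  have hmul : ∫ ω, ((N ω l : ℝ) ^ 2 * ‖ghat ω l‖ ^ 2) ∂μ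
      = (∫ ω, (N ω l : ℝ) ^ 2 ∂μ) * ∫ ω, ‖ghat ω l‖ ^ 2 ∂μ :=
    IndepFun.integral_fun_mul_eq_mul_integral hind2 hX.aestronglyMeasurable hY.aestronglyMeasurable
  have hrw : ∀ ω, ‖(m * (N ω l : ℝ)) • ghat ω l‖ ^ 2
      = m ^ 2 * ((N ω l : ℝ) ^ 2 * ‖ghat ω l‖ ^ 2) := by
    intro ω
    rw [norm_smul]
    have hm0 : 0 ≤ m := le_min (by positivity) hC.le
    rw [Real.norm_eq_abs, abs_mul, abs_of_nonneg hm0, Nat.abs_cast]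
    ring
  have hint : ∫ ω, ‖(m * (N ω l : ℝ)) • ghat ω l‖ ^ 2 ∂μ
      = m ^ 2 * ((↑K * p l * (1 - p l) + ((K : ℝ) * p l) ^ 2) * ∫ ω, ‖ghat ω l‖ ^ 2 ∂μ) := by
    simp_rw [hrw]
    rw [integral_const_mul, hmul, hN2 l]
  rw [hint, ← mul_assoc]
  have hEpos : 0 ≤ ∫ ω, ‖ghat ω l‖ ^ 2 ∂μ :=
    integral_nonneg fun ω => by positivity
  apply mul_le_mul_of_nonneg_right _ hEpos
  have := clip_factor_bound ((K : ℝ) * p l) (p l) C ha (hp l).le (hp1 l) hC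
  calc m ^ 2 * (↑K * p l * (1 - p l) + ((K : ℝ) * p l) ^ 2)
      ≤ C + 1 := by exact_mod_cast this
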